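/- Let I be a monomial ideal with linear quotients whose decomposition function g is regular, i.e., set(g(x_s u)) ⊆ set(u) for all u ∈ G(I) and all s ∈ set(u). Then g(x_s g(x_t u)) = g(x_t g(x_s u)) for all u ∈ M(I) and all s, t ∈ set(u). -/

import Mathlib

/-! Statement 4: if the decomposition function `g` is regular, then
`g(x_s g(x_t u)) = g(x_t g(x_s u))` for every monomial `u` in the ideal and
all `s, t ∈ set(g(u))`. -/

/-- A monomial in `n` variables, recorded by its exponent vector; a monomial
`a` divides `b` iff `a ≤ b` pointwise, and the product of monomials is the sum
of exponent vectors. -/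
abbrev Mon (n : ℕ) := Fin n → ℕ

/-- support of a monomial -/
def msupp {n : ℕ} (a : Mon n) : Finset (Fin n) := Finset.univ.filter fun i => a i ≠ 0

/-- `w ∈ (u_0, …, u_{j-1})` for the monomial ideal generated by the first `j`
of the monomials `u i`. -/
def inPrev {n m : ℕ} (u : Fin m → Mon n) (j : Fin m) (w : Mon n) : Prop :=
  ∃ i < j, u i ≤ w

/-- `set(u_j) = {k : x_k ∈ (u_0,…,u_{j-1}) : u_j}`. -/
def setU {n m : ℕ} (u : Fin m → Mon n) (j : Fin m) : Set (Fin n) :=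
  {k | inPrev u j (Pi.single k 1 + u j)}

/-- `u_0, …, u_{m-1}` has linear quotients: each colon ideal
`(u_0,…,u_{j-1}) : u_j` is generated by the variables it contains, i.e. every
monomial `w` in the colon ideal is divisible by a variable of the colon
ideal. -/
def HasLinearQuotients {n m : ℕ} (u : Fin m → Mon n) : Prop :=
  ∀ j : Fin m, ∀ w : Mon n, inPrev u j (w + u j) → ∃ k ∈ setU u j, k ∈ msupp w

open Classical in
/-- the index of `g(v)`: the smallest `j` with `v ∈ (u_0,…,u_j)`, equivalently
the smallest `j` such that `u j` divides `v`. -/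
noncomputable def gIdx {n m : ℕ} (u : Fin m → Mon n) (v : Mon n)
    (h : ∃ j, u j ≤ v) : Fin m :=
  (Finset.univ.filter fun j => u j ≤ v).min' (by
    obtain ⟨j, hj⟩ := h; exact ⟨j, by simp [hj]⟩)

/-- `g(v)` as a monomial. -/
noncomputable def gmon {n m : ℕ} (u : Fin m → Mon n) (v : Mon n)
    (h : ∃ j, u j ≤ v) : Mon n :=
  u (gIdx u v h)

/-- The decomposition function is regular: `set(g(x_s u_j)) ⊆ set(u_j)` for
every generator `u_j` and every `s ∈ set(u_j)`. -/
def RegularDecomposition {n m : ℕ} (u : Fin m → Mon n) : Prop :=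
  ∀ j : Fin m, ∀ s ∈ setU u j,
    setU u (gIdx u (Pi.single s 1 + u j) ⟨j, le_add_self⟩) ⊆ setU u j

-- aux
open Classical in
lemma gIdx_dvd {n m : ℕ} (u : Fin m → Mon n) (v : Mon n) (h : ∃ j, u j ≤ v) :
    u (gIdx u v h) ≤ v := by
  have hmem : gIdx u v h ∈ (Finset.univ.filter fun j => u j ≤ v) :=
    Finset.min'_mem _ _
  simpa using hmem

open Classical in
lemma gIdx_le {n m : ℕ} (u : Fin m → Mon n) (v : Mon n) (h : ∃ j, u j ≤ v)
    {i : Fin m} (hi : u i ≤ v) : gIdx u v h ≤ i :=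
  Finset.min'_le _ _ (by simp [hi])

lemma gIdx_congr {n m : ℕ} {u : Fin m → Mon n} {v w : Mon n} (hvw : v = w)
    (hv : ∃ j, u j ≤ v) (hw : ∃ j, u j ≤ w) : gIdx u v hv = gIdx u w hw := by
  subst hvw; rfl

lemma single_add_le {n : ℕ} {a b : Mon n} (k : Fin n) (hab : a ≤ b) (hk : a k < b k) :
    (Pi.single k 1 : Mon n) + a ≤ b := by
  intro l
  by_cases hl : l = k
  · subst hl
    simp only [Pi.add_apply, Pi.single_eq_same]
    omega
  · simp only [Pi.add_apply, Pi.single_apply, if_neg hl]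
    simpa using hab l

/-- key lemma: `g(x_s z) ≤ x_s · g(z)` for any `z ∈ M(I)`. -/
lemma lemD {n m : ℕ} {u : Fin m → Mon n} (hlq : HasLinearQuotients u)
    (hreg : RegularDecomposition u) (z : Mon n) (h : ∃ j, u j ≤ z) (s : Fin n)
    (h' : ∃ j, u j ≤ Pi.single s 1 + z) :
    u (gIdx u ((Pi.single s 1 : Mon n) + z) h') ≤ Pi.single s 1 + u (gIdx u z h) := by
  set a := gIdx u z h with ha
  set c := gIdx u ((Pi.single s 1 : Mon n) + z) h' with hc
  have hua : u a ≤ z := gIdx_dvd u z h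
  have huc : u c ≤ Pi.single s 1 + z := gIdx_dvd u _ h'
  have hca : c ≤ a := gIdx_le u _ h' (hua.trans le_add_self)
  rcases eq_or_lt_of_le hca with hEq | hlt
  · rw [hEq]; exact le_add_self
  -- c < a : apply linear quotients at a
  obtain ⟨k, hkset, hksupp⟩ := hlq a (fun l => ((Pi.single s 1 : Mon n) + z) l - u a l) (by
    refine ⟨c, hlt, ?_⟩
    have heq : (fun l => ((Pi.single s 1 : Mon n) + z) l - u a l) + u a = Pi.single s 1 + z := by
      funext l
      have h1 := hua l
      have h2 : u a l ≤ ((Pi.single s 1 : Mon n) + z) l := (hua.trans le_add_self) l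
      simp only [Pi.add_apply] at h2 ⊢
      omega
    rw [heq]; exact huc)
  have hkw : u a k < ((Pi.single s 1 : Mon n) + z) k := by
    have h1 : (fun l => ((Pi.single s 1 : Mon n) + z) l - u a l) k ≠ 0 := by
      simpa [msupp] using hksupp
    have h2 : u a k ≤ ((Pi.single s 1 : Mon n) + z) k := (hua.trans le_add_self) k
    simp only [Pi.add_apply] at h1 h2 ⊢
    omega
  by_cases hkz : u a k < z k
  · -- contradiction with minimality of a
    exfalso
    obtain ⟨e, helt, hediv⟩ := hkset
    have : u e ≤ z := hediv.trans (single_add_le k hua hkz)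
    have := gIdx_le u z h this
    rw [← ha] at this
    exact absurd (lt_of_le_of_lt this helt) (lt_irrefl a)
  · -- then k = s, so s ∈ set(u_a)
    have hks : k = s := by
      have h1 := hua k
      by_contra hne
      rw [Pi.add_apply, Pi.single_apply, if_neg hne] at hkw
      omega
    subst hks
    -- d = gIdx (x_k + u a)
    have hda : ∃ j, u j ≤ Pi.single k 1 + u a := ⟨a, le_add_self⟩
    have hud : u (gIdx u ((Pi.single k 1 : Mon n) + u a) hda) ≤ Pi.single k 1 + u a :=
      gIdx_dvd u _ hda
    set d := gIdx u ((Pi.single k 1 : Mon n) + u a) hda with hd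
    have hudz : u d ≤ Pi.single k 1 + z := hud.trans (add_le_add le_rfl hua)
    have hcd : c ≤ d := gIdx_le u _ h' hudz
    rcases eq_or_lt_of_le hcd with hEq | hlt2
    · rw [hEq]; exact hud
    exfalso
    obtain ⟨k', hk'set, hk'supp⟩ := hlq d (fun l => ((Pi.single k 1 : Mon n) + z) l - u d l) (by
      refine ⟨c, hlt2, ?_⟩
      have heq : (fun l => ((Pi.single k 1 : Mon n) + z) l - u d l) + u d = Pi.single k 1 + z := by
        funext l
        have h2 := hudz l
        simp only [Pi.add_apply] at h2 ⊢
        omega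
      rw [heq]; exact huc)
    have hk'w : u d k' < ((Pi.single k 1 : Mon n) + z) k' := by
      have h1 : (fun l => ((Pi.single k 1 : Mon n) + z) l - u d l) k' ≠ 0 := by
        simpa [msupp] using hk'supp
      have h2 := hudz k'
      simp only [Pi.add_apply] at h1 h2 ⊢
      omega
    by_cases hk'2 : u d k' < ((Pi.single k 1 : Mon n) + u a) k'
    · -- contradiction with minimality of d
      obtain ⟨e, helt, hediv⟩ := hk'set
      have : u e ≤ Pi.single k 1 + u a := hediv.trans (single_add_le k' hud hk'2)
      have := gIdx_le u _ hda this
      rw [← hd] at this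
      exact absurd (lt_of_le_of_lt this helt) (lt_irrefl d)
    · -- u d k' = (x_k + u a) k', hence u a k' < z k'; use regularity
      have hzk' : u a k' < z k' := by
        have h1 := hud k'
        have h2 := hk'w
        simp only [Pi.add_apply] at h1 h2 hk'2 ⊢
        omega
      have hk'a : k' ∈ setU u a := hreg a k hkset hk'set
      obtain ⟨e, helt, hediv⟩ := hk'a
      have : u e ≤ z := hediv.trans (single_add_le k' hua hzk')
      have := gIdx_le u z h this
      rw [← ha] at this
      exact absurd (lt_of_le_of_lt this helt) (lt_irrefl a)

/-- `g(x_s z) = g(x_s g(z))` (as indices) for any `z ∈ M(I)`. -/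
lemma lemE {n m : ℕ} {u : Fin m → Mon n} (hlq : HasLinearQuotients u)
    (hreg : RegularDecomposition u) (z : Mon n) (h : ∃ j, u j ≤ z) (s : Fin n)
    (h1 : ∃ j, u j ≤ Pi.single s 1 + z)
    (h2 : ∃ j, u j ≤ Pi.single s 1 + u (gIdx u z h)) :
    gIdx u (Pi.single s 1 + z) h1 = gIdx u (Pi.single s 1 + u (gIdx u z h)) h2 := by
  apply le_antisymm
  · exact gIdx_le u _ h1 ((gIdx_dvd u _ h2).trans (add_le_add le_rfl (gIdx_dvd u z h)))
  · exact gIdx_le u _ h2 (lemD hlq hreg z h s h1)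


theorem stmt4 {n m : ℕ} (u : Fin m → Mon n)
    (hmin : ∀ i j : Fin m, u i ≤ u j → i = j)
    (hlq : HasLinearQuotients u)
    (hreg : RegularDecomposition u)
    (v : Mon n) (hv : ∃ j, u j ≤ v) (s t : Fin n)
    (hs : s ∈ setU u (gIdx u v hv)) (ht : t ∈ setU u (gIdx u v hv)) :
    -- `g(x_s g(x_t v)) = g(x_t g(x_s v))`
    gmon u (Pi.single s 1 + gmon u (Pi.single t 1 + v)
        (hv.imp fun _ hj => hj.trans le_add_self))
        ⟨gIdx u (Pi.single t 1 + v) (hv.imp fun _ hj => hj.trans le_add_self),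
          le_add_self⟩ =
      gmon u (Pi.single t 1 + gmon u (Pi.single s 1 + v)
        (hv.imp fun _ hj => hj.trans le_add_self))
        ⟨gIdx u (Pi.single s 1 + v) (hv.imp fun _ hj => hj.trans le_add_self),
          le_add_self⟩ := by
  have ht' : ∃ j, u j ≤ Pi.single t 1 + v := hv.imp fun _ hj => hj.trans le_add_self
  have hs' : ∃ j, u j ≤ Pi.single s 1 + v := hv.imp fun _ hj => hj.trans le_add_self
  have hst : ∃ j, u j ≤ Pi.single s 1 + (Pi.single t 1 + v) :=
    ht'.imp fun _ hj => hj.trans le_add_self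
  have hts : ∃ j, u j ≤ Pi.single t 1 + (Pi.single s 1 + v) :=
    hs'.imp fun _ hj => hj.trans le_add_self
  unfold gmon
  refine congrArg u ?_
  calc gIdx u (Pi.single s 1 + u (gIdx u (Pi.single t 1 + v) ht'))
        ⟨gIdx u (Pi.single t 1 + v) ht', le_add_self⟩
      = gIdx u (Pi.single s 1 + (Pi.single t 1 + v)) hst :=
        (lemE hlq hreg (Pi.single t 1 + v) ht' s hst _).symm
    _ = gIdx u (Pi.single t 1 + (Pi.single s 1 + v)) hts :=
        gIdx_congr (by rw [add_left_comm]) _ _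
    _ = gIdx u (Pi.single t 1 + u (gIdx u (Pi.single s 1 + v) hs'))
        ⟨gIdx u (Pi.single s 1 + v) hs', le_add_self⟩ :=
        lemE hlq hreg (Pi.single s 1 + v) hs' t hts _
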